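/- For the set S = {1/n! : n ∈ ℕ, n ≥ 1} ⊆ ℝ, the lower tangent cone of S at 0 equals {0}. -/

import Mathlib

open Filter Metric Topology

/-- Lower tangent cone (Peano): `v ∈ Tan⁻(S,x)` iff `lim_{t→0⁺} (1/t) d(x+tv,S) = 0`. -/
def lowerTangentCone (S : Set ℝ) (x : ℝ) : Set ℝ :=
  {v : ℝ | Filter.Tendsto (fun t : ℝ => t⁻¹ * Metric.infDist (x + t * v) S) (𝓝[>] (0:ℝ)) (𝓝 0)}

lemma le_infDist_aux {S : Set ℝ} (hS : S.Nonempty) {x b : ℝ}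
    (h : ∀ y ∈ S, b ≤ dist x y) : b ≤ Metric.infDist x S := by
  by_contra hlt
  obtain ⟨y, hy, hd⟩ := (Metric.infDist_lt_iff hS).1 (lt_of_not_ge hlt)
  exact absurd (h y hy) (not_le.2 hd)

lemma fact_seq_tendsto : Tendsto (fun n : ℕ => ((n + 1).factorial : ℝ)⁻¹) atTop (𝓝 0) := by
  apply squeeze_zero (fun n => by positivity) (g := fun n : ℕ => 1 / (n + 1 : ℝ))
  · intro n
    rw [one_div]
    apply inv_anti₀ (by positivity)
    exact_mod_cast Nat.self_le_factorial (n + 1)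
  · exact tendsto_one_div_add_atTop_nhds_zero_nat

theorem lowerTangentCone_factorial_set :
    lowerTangentCone {x : ℝ | ∃ n : ℕ, 1 ≤ n ∧ x = 1 / (Nat.factorial n : ℝ)} 0
      = ({0} : Set ℝ) := by
  set S : Set ℝ := {x : ℝ | ∃ n : ℕ, 1 ≤ n ∧ x = 1 / (Nat.factorial n : ℝ)} with hSdef
  have hSne : S.Nonempty := ⟨1, ⟨1, le_refl 1, by norm_num⟩⟩
  have hSpos : ∀ y ∈ S, 0 < y := by
    rintro y ⟨n, -, rfl⟩
    positivity
  ext v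
  simp only [Set.mem_singleton_iff, lowerTangentCone, Set.mem_setOf_eq, zero_add]
  constructor
  · intro hv
    by_contra hv0
    rcases lt_or_gt_of_ne hv0 with hneg | hpos
    · -- v < 0 : infDist(t v, S) ≥ -t v
      have hev : ∀ᶠ t in 𝓝[>] (0:ℝ), -v ≤ t⁻¹ * Metric.infDist (t * v) S := by
        filter_upwards [self_mem_nhdsWithin] with t ht
        have ht0 : (0:ℝ) < t := ht
        have hb : t * (-v) ≤ Metric.infDist (t * v) S := by
          apply le_infDist_aux hSne
          intro y hy
          have hy0 := hSpos y hy
          have : t * v < 0 := mul_neg_of_pos_of_neg ht0 hneg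
          rw [Real.dist_eq, abs_of_neg (by linarith)]
          linarith
        calc -v = t⁻¹ * (t * (-v)) := by field_simp
          _ ≤ t⁻¹ * Metric.infDist (t * v) S := by
              apply mul_le_mul_of_nonneg_left hb (by positivity)
      have := ge_of_tendsto hv hev
      linarith
    · -- v > 0 : use midpoints between consecutive factorial reciprocals
      set m : ℕ → ℝ := fun k => (((k).factorial : ℝ)⁻¹ + ((k+1).factorial : ℝ)⁻¹) / 2 with hm
      have hmpos : ∀ k, 0 < m k := fun k => by positivity
      have hinf : ∀ k : ℕ, 1 ≤ k →
          (((k).factorial : ℝ)⁻¹ - ((k+1).factorial : ℝ)⁻¹) / 2 ≤ Metric.infDist (m k) S := by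
        intro k hk
        apply le_infDist_aux hSne
        rintro y ⟨j, hj1, rfl⟩
        have hfa : (0:ℝ) < (k.factorial : ℝ) := by positivity
        rw [Real.dist_eq, one_div]
        rcases le_or_gt j k with hjk | hjk
        · -- 1/j! ≥ 1/k!
          have h1 : ((k.factorial : ℝ))⁻¹ ≤ ((j.factorial : ℝ))⁻¹ := by
            apply inv_anti₀ (by positivity)
            exact_mod_cast Nat.factorial_le hjk
          have h2 : ((k+1).factorial : ℝ)⁻¹ ≤ ((k.factorial : ℝ))⁻¹ := by
            apply inv_anti₀ (by positivity)
            exact_mod_cast Nat.factorial_le (Nat.le_succ k)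
          rw [abs_of_nonpos (by simp only [hm]; linarith)]
          simp only [hm]; linarith
        · -- j ≥ k+1 so 1/j! ≤ 1/(k+1)!
          have h1 : ((j.factorial : ℝ))⁻¹ ≤ ((k+1).factorial : ℝ)⁻¹ := by
            apply inv_anti₀ (by positivity)
            exact_mod_cast Nat.factorial_le hjk
          have h2 : ((k+1).factorial : ℝ)⁻¹ ≤ ((k.factorial : ℝ))⁻¹ := by
            apply inv_anti₀ (by positivity)
            exact_mod_cast Nat.factorial_le (Nat.le_succ k)
          rw [abs_of_nonneg (by simp only [hm]; linarith)]
          simp only [hm]; linarith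
      -- the sequence t n = m (n+1) / v tends to 0 within (0, ∞)
      set u : ℕ → ℝ := fun n => m (n + 1) / v with hu
      have hupos : ∀ n, 0 < u n := fun n => div_pos (hmpos _) hpos
      have hmten : Tendsto (fun n : ℕ => m (n + 1)) atTop (𝓝 0) := by
        have h1 : Tendsto (fun n : ℕ => (((n+1).factorial : ℝ))⁻¹) atTop (𝓝 0) :=
          fact_seq_tendsto
        have h2 : Tendsto (fun n : ℕ => (((n+2).factorial : ℝ))⁻¹) atTop (𝓝 0) := by
          have := fact_seq_tendsto.comp (tendsto_add_atTop_nat 1)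
          simpa [Function.comp_def] using this
        have := (h1.add h2).div_const 2
        simpa [hm] using this
      have huten : Tendsto u atTop (𝓝[>] (0:ℝ)) := by
        apply tendsto_nhdsWithin_of_tendsto_nhds_of_eventually_within
        · simpa [hu] using hmten.div_const v
        · filter_upwards with n; exact hupos n
      have hcomp : Tendsto (fun n => (u n)⁻¹ * Metric.infDist (u n * v) S) atTop (𝓝 0) :=
        hv.comp huten
      have hev : ∀ᶠ n in (atTop : Filter ℕ), v / 3 ≤ (u n)⁻¹ * Metric.infDist (u n * v) S := by
        filter_upwards with n
        set a : ℝ := (((n+1).factorial : ℝ))⁻¹ with ha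
        set b : ℝ := (((n+2).factorial : ℝ))⁻¹ with hb
        have ha0 : 0 < a := by positivity
        have hb0 : 0 < b := by positivity
        have hba : b ≤ a / 2 := by
          have hnat : 2 * (n+1).factorial ≤ (n+2).factorial := by
            rw [show n + 2 = (n + 1) + 1 from rfl, Nat.factorial_succ]
            exact Nat.mul_le_mul_right _ (by omega)
          have : b ≤ ((2 * (n+1).factorial : ℕ) : ℝ)⁻¹ := by
            apply inv_anti₀ (by positivity)
            exact_mod_cast hnat
          calc b ≤ ((2 * (n+1).factorial : ℕ) : ℝ)⁻¹ := this
            _ = a / 2 := by push_cast; rw [mul_inv]; rw [ha]; ring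
        have hmval : m (n+1) = (a + b) / 2 := by
          simp only [hm, ha, hb]
        have hm0 : 0 < m (n+1) := hmpos _
        have hdinf : (a - b) / 2 ≤ Metric.infDist (m (n+1)) S := hinf (n+1) (by omega)
        have huv : u n * v = m (n+1) := by
          simp only [hu]; field_simp
        have huinv : (u n)⁻¹ = v / m (n+1) := by
          simp only [hu, one_div, inv_div]
        rw [huv, huinv]
        have hstep : v / m (n+1) * ((a - b) / 2) ≤ v / m (n+1) * Metric.infDist (m (n+1)) S :=
          mul_le_mul_of_nonneg_left hdinf (by positivity)
        refine le_trans ?_ hstep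
        rw [div_mul_eq_mul_div, div_le_div_iff₀ (by norm_num) hm0, hmval]
        nlinarith
      have := ge_of_tendsto hcomp hev
      linarith
  · rintro rfl
    have h0 : Metric.infDist (0:ℝ) S = 0 := by
      apply Metric.infDist_zero_of_mem_closure
      apply mem_closure_of_tendsto fact_seq_tendsto
      filter_upwards with n
      exact ⟨n + 1, Nat.le_add_left 1 n, by rw [one_div]⟩
    have : (fun t : ℝ => t⁻¹ * Metric.infDist (t * 0) S) = fun _ => 0 := by
      funext t; simp [h0]
    rw [this]
    exact tendsto_const_nhds
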